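/- Let A be a nonempty set of positive linear normalized functionals (probability measures viewed as functionals) on C(X,ℝ). Then the functional ν_A defined by ν_A(φ) = sup{μ(φ) : μ ∈ A} is well-defined (the supremum is finite) and is normed, order-preserving, weakly additive, positively homogeneous, and semiadditive. -/

import Mathlib

theorem stmt_6 {X : Type*} [TopologicalSpace X] [CompactSpace X] [T2Space X] [Nonempty X]
    (A : Set ((C(X, ℝ)) → ℝ)) (hAne : A.Nonempty)
    (hlin : ∀ μ ∈ A, (∀ φ ψ : C(X, ℝ), μ (φ + ψ) = μ φ + μ ψ) ∧
      (∀ (c : ℝ) (φ : C(X, ℝ)), μ (c • φ) = c * μ φ))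
    (hpos : ∀ μ ∈ A, ∀ φ : C(X, ℝ), 0 ≤ φ → 0 ≤ μ φ)
    (hnorm : ∀ μ ∈ A, μ 1 = 1) :
    (∀ φ : C(X, ℝ), BddAbove ((fun μ => μ φ) '' A)) ∧
    (⨆ μ : A, (μ : (C(X, ℝ)) → ℝ) 1) = 1 ∧
    (∀ φ ψ : C(X, ℝ), φ ≤ ψ →
      (⨆ μ : A, (μ : (C(X, ℝ)) → ℝ) φ) ≤ ⨆ μ : A, (μ : (C(X, ℝ)) → ℝ) ψ) ∧
    (∀ (φ : C(X, ℝ)) (c : ℝ),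
      (⨆ μ : A, (μ : (C(X, ℝ)) → ℝ) (φ + ContinuousMap.const X c)) =
        (⨆ μ : A, (μ : (C(X, ℝ)) → ℝ) φ) + c) ∧
    (∀ (t : ℝ), 0 ≤ t → ∀ φ : C(X, ℝ),
      (⨆ μ : A, (μ : (C(X, ℝ)) → ℝ) (t • φ)) = t * ⨆ μ : A, (μ : (C(X, ℝ)) → ℝ) φ) ∧
    (∀ φ ψ : C(X, ℝ),
      (⨆ μ : A, (μ : (C(X, ℝ)) → ℝ) (φ + ψ)) ≤
        (⨆ μ : A, (μ : (C(X, ℝ)) → ℝ) φ) + ⨆ μ : A, (μ : (C(X, ℝ)) → ℝ) ψ) := by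
  have hAne' : Nonempty A := hAne.to_subtype
  -- monotonicity of each μ
  have hmono : ∀ μ ∈ A, ∀ φ ψ : C(X, ℝ), φ ≤ ψ → μ φ ≤ μ ψ := by
    intro μ hμ φ ψ hle
    have h1 : μ ψ = μ φ + μ (ψ - φ) := by
      have := (hlin μ hμ).1 φ (ψ - φ)
      simp at this
      simpa using this
    have h2 : 0 ≤ μ (ψ - φ) := hpos μ hμ _ (by simpa [sub_nonneg] using hle)
    linarith
  -- bound: μ φ ≤ ‖φ‖
  have hbound : ∀ μ ∈ A, ∀ φ : C(X, ℝ), μ φ ≤ ‖φ‖ := by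
    intro μ hμ φ
    have hle : φ ≤ ‖φ‖ • (1 : C(X, ℝ)) := by
      rw [ContinuousMap.le_def]
      intro x
      simpa using (Real.le_norm_self _).trans (φ.norm_coe_le_norm x)
    have := hmono μ hμ _ _ hle
    rwa [(hlin μ hμ).2 ‖φ‖ 1, hnorm μ hμ, mul_one] at this
  have hbdd : ∀ φ : C(X, ℝ), BddAbove (Set.range fun μ : A => (μ : (C(X, ℝ)) → ℝ) φ) := by
    intro φ
    exact ⟨‖φ‖, by rintro y ⟨μ, rfl⟩; exact hbound μ μ.2 φ⟩
  have hbdd' : ∀ φ : C(X, ℝ), BddAbove ((fun μ => μ φ) '' A) := by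
    intro φ
    exact ⟨‖φ‖, by rintro y ⟨μ, hμ, rfl⟩; exact hbound μ hμ φ⟩
  refine ⟨hbdd', ?_, ?_, ?_, ?_, ?_⟩
  · -- normed
    have : ∀ μ : A, (μ : (C(X, ℝ)) → ℝ) 1 = 1 := fun μ => hnorm μ μ.2
    simp [this]
  · -- monotone
    intro φ ψ hle
    exact ciSup_le fun μ => (hmono μ μ.2 φ ψ hle).trans (le_ciSup (hbdd ψ) μ)
  · -- weakly additive
    intro φ c
    have key : ∀ μ : A, (μ : (C(X, ℝ)) → ℝ) (φ + ContinuousMap.const X c) =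
        (μ : (C(X, ℝ)) → ℝ) φ + c := by
      intro μ
      have h1 : (μ : (C(X, ℝ)) → ℝ) (φ + ContinuousMap.const X c) =
          (μ : (C(X, ℝ)) → ℝ) φ + (μ : (C(X, ℝ)) → ℝ) (ContinuousMap.const X c) :=
        (hlin μ μ.2).1 _ _
      have h2 : ContinuousMap.const X c = c • (1 : C(X, ℝ)) := by
        ext x; simp
      have h3 : (μ : (C(X, ℝ)) → ℝ) (ContinuousMap.const X c) = c := by
        rw [h2, (hlin μ μ.2).2 c 1, hnorm μ μ.2, mul_one]
      rw [h1, h3]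
    simp only [key]
    apply le_antisymm
    · exact ciSup_le fun μ => add_le_add_left (le_ciSup (hbdd φ) μ) c
    · have hb2 : BddAbove (Set.range fun μ : A => (μ : (C(X, ℝ)) → ℝ) φ + c) :=
        ⟨‖φ‖ + c, by rintro y ⟨μ, rfl⟩; exact add_le_add_left (hbound μ μ.2 φ) c⟩
      rw [← le_sub_iff_add_le]
      exact ciSup_le fun μ => le_sub_iff_add_le.mpr (le_ciSup hb2 μ)
  · -- positively homogeneous
    intro t ht φ
    have key : ∀ μ : A, (μ : (C(X, ℝ)) → ℝ) (t • φ) = t * (μ : (C(X, ℝ)) → ℝ) φ :=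
      fun μ => (hlin μ μ.2).2 t φ
    simp only [key]
    exact (Real.mul_iSup_of_nonneg ht _).symm
  · -- semiadditive
    intro φ ψ
    refine ciSup_le fun μ => ?_
    rw [(hlin μ μ.2).1 φ ψ]
    exact add_le_add (le_ciSup (hbdd φ) μ) (le_ciSup (hbdd ψ) μ)
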